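/- Suppose a multilinear polynomial f in n variables can be written as a sum of at most N terms, where each term is a product of multilinear polynomials p_1,…,p_ℓ on pairwise disjoint variable sets X_1,…,X_ℓ with |X_i| ≤ √n for all i, and such that under a fixed balanced partition φ at most two of the sets φ(X_i) are bi-chromatic. Then rank_φ(f) ≤ N · 2^{√n}. -/

import Mathlib

open MvPolynomial

/-- The exponent vector of the multilinear monomial `∏_{i∈p} y_i · ∏_{j∈q} z_j`,
where the `Y` variables are `Sum.inl` and the `Z` variables are `Sum.inr`. -/
noncomputable def mlMonom (m : ℕ) (p q : Finset (Fin m)) : (Fin m ⊕ Fin m) →₀ ℕ :=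
  (∑ i ∈ p, Finsupp.single (Sum.inl i) 1) + (∑ j ∈ q, Finsupp.single (Sum.inr j) 1)

lemma mlMonom_apply_inl {m : ℕ} (p q : Finset (Fin m)) (i : Fin m) :
    mlMonom m p q (Sum.inl i) = if i ∈ p then 1 else 0 := by
  classical
  simp [mlMonom, Finsupp.finset_sum_apply, Finsupp.single_apply]

lemma mlMonom_apply_inr {m : ℕ} (p q : Finset (Fin m)) (j : Fin m) :
    mlMonom m p q (Sum.inr j) = if j ∈ q then 1 else 0 := by
  classical
  simp [mlMonom, Finsupp.finset_sum_apply, Finsupp.single_apply]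

lemma eq_mlMonom_of_add {m : ℕ} {p q : Finset (Fin m)} {a b : (Fin m ⊕ Fin m) →₀ ℕ}
    (h : a + b = mlMonom m p q) :
    a = mlMonom m (p.filter (fun i => a (Sum.inl i) ≠ 0)) (q.filter (fun j => a (Sum.inr j) ≠ 0)) ∧
    b = mlMonom m (p \ p.filter (fun i => a (Sum.inl i) ≠ 0))
          (q \ q.filter (fun j => a (Sum.inr j) ≠ 0)) := by
  classical
  constructor <;> ext v <;> rcases v with i | j
  · have hv : a (Sum.inl i) + b (Sum.inl i) = (if i ∈ p then 1 else 0) := by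
      simpa [mlMonom_apply_inl] using DFunLike.congr_fun h (Sum.inl i)
    rw [mlMonom_apply_inl]
    by_cases hip : i ∈ p <;> simp [hip, Finset.mem_filter] at hv ⊢ <;> (try split_ifs) <;> omega
  · have hv : a (Sum.inr j) + b (Sum.inr j) = (if j ∈ q then 1 else 0) := by
      simpa [mlMonom_apply_inr] using DFunLike.congr_fun h (Sum.inr j)
    rw [mlMonom_apply_inr]
    by_cases hjq : j ∈ q <;> simp [hjq, Finset.mem_filter] at hv ⊢ <;> (try split_ifs) <;> omega
  · have hv : a (Sum.inl i) + b (Sum.inl i) = (if i ∈ p then 1 else 0) := by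
      simpa [mlMonom_apply_inl] using DFunLike.congr_fun h (Sum.inl i)
    rw [mlMonom_apply_inl]
    by_cases hip : i ∈ p <;>
      simp [hip, Finset.mem_sdiff, Finset.mem_filter] at hv ⊢ <;> (try split_ifs) <;> omega
  · have hv : a (Sum.inr j) + b (Sum.inr j) = (if j ∈ q then 1 else 0) := by
      simpa [mlMonom_apply_inr] using DFunLike.congr_fun h (Sum.inr j)
    rw [mlMonom_apply_inr]
    by_cases hjq : j ∈ q <;>
      simp [hjq, Finset.mem_sdiff, Finset.mem_filter] at hv ⊢ <;> (try split_ifs) <;> omega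

lemma mlMonom_add_mlMonom {m : ℕ} {p q p1 q1 : Finset (Fin m)} (hp : p1 ⊆ p) (hq : q1 ⊆ q) :
    mlMonom m p1 q1 + mlMonom m (p \ p1) (q \ q1) = mlMonom m p q := by
  classical
  ext v
  rcases v with i | j
  · simp only [Finsupp.add_apply, mlMonom_apply_inl, Finset.mem_sdiff]
    by_cases h1 : i ∈ p1
    · simp [h1, hp h1]
    · by_cases h2 : i ∈ p <;> simp [h1, h2]
  · simp only [Finsupp.add_apply, mlMonom_apply_inr, Finset.mem_sdiff]
    by_cases h1 : j ∈ q1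
    · simp [h1, hq h1]
    · by_cases h2 : j ∈ q <;> simp [h1, h2]


/-- The partial derivative matrix of a polynomial in the variables `Y ∪ Z`. -/
noncomputable def pdMatrix (F : Type) [Field F] (m : ℕ)
    (f : MvPolynomial (Fin m ⊕ Fin m) F) :
    Matrix (Finset (Fin m)) (Finset (Fin m)) F :=
  fun p q => f.coeff (mlMonom m p q)

noncomputable def pdRank (F : Type) [Field F] (m : ℕ)
    (f : MvPolynomial (Fin m ⊕ Fin m) F) : ℕ :=
  (pdMatrix F m f).rank

lemma filter_mlMonom_inl {m : ℕ} {p y1 y2 : Finset (Fin m)} (h : y1 ⊆ p) :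
    p.filter (fun i => mlMonom m y1 y2 (Sum.inl i) ≠ 0) = y1 := by
  classical
  ext i
  simp only [Finset.mem_filter, mlMonom_apply_inl]
  by_cases h1 : i ∈ y1
  · simp [h1, h h1]
  · simp [h1]

lemma filter_mlMonom_inr {m : ℕ} {q y1 y2 : Finset (Fin m)} (h : y2 ⊆ q) :
    q.filter (fun j => mlMonom m y1 y2 (Sum.inr j) ≠ 0) = y2 := by
  classical
  ext j
  simp only [Finset.mem_filter, mlMonom_apply_inr]
  by_cases h1 : j ∈ y2
  · simp [h1, h h1]
  · simp [h1]

lemma coeff_mul_mlMonom {F : Type} [Field F] {m : ℕ}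
    (g h : MvPolynomial (Fin m ⊕ Fin m) F) (p q : Finset (Fin m)) :
    (g * h).coeff (mlMonom m p q)
      = ∑ x ∈ p.powerset ×ˢ q.powerset,
          g.coeff (mlMonom m x.1 x.2) * h.coeff (mlMonom m (p \ x.1) (q \ x.2)) := by
  classical
  rw [MvPolynomial.coeff_mul]
  refine Finset.sum_nbij'
    (fun x => (p.filter (fun i => x.1 (Sum.inl i) ≠ 0), q.filter (fun j => x.1 (Sum.inr j) ≠ 0)))
    (fun y => (mlMonom m y.1 y.2, mlMonom m (p \ y.1) (q \ y.2))) ?_ ?_ ?_ ?_ ?_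
  · intro x hx
    simp [Finset.mem_product, Finset.mem_powerset, Finset.filter_subset]
  · intro y hy
    simp only [Finset.mem_product, Finset.mem_powerset] at hy
    simpa [Finset.mem_antidiagonal] using mlMonom_add_mlMonom hy.1 hy.2
  · intro x hx
    rw [Finset.HasAntidiagonal.mem_antidiagonal] at hx
    obtain ⟨h1, h2⟩ := eq_mlMonom_of_add hx
    exact Prod.ext h1.symm h2.symm
  · intro y hy
    simp only [Finset.mem_product, Finset.mem_powerset] at hy
    exact Prod.ext (filter_mlMonom_inl hy.1) (filter_mlMonom_inr hy.2)
  · intro x hx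
    rw [Finset.HasAntidiagonal.mem_antidiagonal] at hx
    obtain ⟨h1, h2⟩ := eq_mlMonom_of_add hx
    rw [← h1, ← h2]

def LeftOnly {F : Type} [Field F] {m : ℕ} (g : MvPolynomial (Fin m ⊕ Fin m) F) : Prop :=
  ∀ d ∈ g.support, ∀ j : Fin m, d (Sum.inr j) = 0

def RightOnly {F : Type} [Field F] {m : ℕ} (g : MvPolynomial (Fin m ⊕ Fin m) F) : Prop :=
  ∀ d ∈ g.support, ∀ i : Fin m, d (Sum.inl i) = 0

lemma leftOnly_of_vars {F : Type} [Field F] {m : ℕ} {g : MvPolynomial (Fin m ⊕ Fin m) F}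
    (h : ∀ v ∈ g.vars, ∃ i, v = Sum.inl i) : LeftOnly g := by
  intro d hd j
  by_contra hne
  have h1 : Sum.inr j ∈ d.support := Finsupp.mem_support_iff.2 hne
  have h2 : (Sum.inr j : Fin m ⊕ Fin m) ∈ g.vars := (MvPolynomial.mem_vars _).2 ⟨d, hd, h1⟩
  obtain ⟨i, hi⟩ := h _ h2
  exact nomatch hi

lemma rightOnly_of_vars {F : Type} [Field F] {m : ℕ} {g : MvPolynomial (Fin m ⊕ Fin m) F}
    (h : ∀ v ∈ g.vars, ∃ i, v = Sum.inr i) : RightOnly g := by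
  intro d hd i
  by_contra hne
  have h1 : Sum.inl i ∈ d.support := Finsupp.mem_support_iff.2 hne
  have h2 : (Sum.inl i : Fin m ⊕ Fin m) ∈ g.vars := (MvPolynomial.mem_vars _).2 ⟨d, hd, h1⟩
  obtain ⟨i', hi⟩ := h _ h2
  exact nomatch hi

lemma LeftOnly.coeff_eq_zero {F : Type} [Field F] {m : ℕ} {g : MvPolynomial (Fin m ⊕ Fin m) F}
    (hg : LeftOnly g) {p1 q1 : Finset (Fin m)} (hq : q1.Nonempty) :
    g.coeff (mlMonom m p1 q1) = 0 := by
  by_contra hne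
  obtain ⟨j, hj⟩ := hq
  have := hg _ (MvPolynomial.mem_support_iff.2 hne) j
  rw [mlMonom_apply_inr] at this
  simp [hj] at this

lemma RightOnly.coeff_eq_zero {F : Type} [Field F] {m : ℕ} {g : MvPolynomial (Fin m ⊕ Fin m) F}
    (hg : RightOnly g) {p1 q1 : Finset (Fin m)} (hp : p1.Nonempty) :
    g.coeff (mlMonom m p1 q1) = 0 := by
  by_contra hne
  obtain ⟨i, hi⟩ := hp
  have := hg _ (MvPolynomial.mem_support_iff.2 hne) i
  rw [mlMonom_apply_inl] at this
  simp [hi] at this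

lemma coeff_mul_mlMonom_left {F : Type} [Field F] {m : ℕ}
    {g : MvPolynomial (Fin m ⊕ Fin m) F} (h : MvPolynomial (Fin m ⊕ Fin m) F)
    (hg : LeftOnly g) (p q : Finset (Fin m)) :
    (g * h).coeff (mlMonom m p q)
      = ∑ p1 ∈ p.powerset, g.coeff (mlMonom m p1 ∅) * h.coeff (mlMonom m (p \ p1) q) := by
  classical
  rw [coeff_mul_mlMonom, Finset.sum_product]
  refine Finset.sum_congr rfl fun p1 _ => ?_
  rw [Finset.sum_eq_single ∅]
  · simp
  · intro q1 _ hq1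
    rw [hg.coeff_eq_zero (Finset.nonempty_iff_ne_empty.2 hq1), zero_mul]
  · intro habs
    exact absurd (Finset.empty_mem_powerset q) habs

lemma coeff_mul_mlMonom_right {F : Type} [Field F] {m : ℕ}
    {g : MvPolynomial (Fin m ⊕ Fin m) F} (h : MvPolynomial (Fin m ⊕ Fin m) F)
    (hg : RightOnly g) (p q : Finset (Fin m)) :
    (g * h).coeff (mlMonom m p q)
      = ∑ q1 ∈ q.powerset, g.coeff (mlMonom m ∅ q1) * h.coeff (mlMonom m p (q \ q1)) := by
  classical
  rw [coeff_mul_mlMonom, Finset.sum_product_right]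
  refine Finset.sum_congr rfl fun q1 _ => ?_
  rw [Finset.sum_eq_single ∅]
  · simp
  · intro p1 _ hp1
    rw [hg.coeff_eq_zero (Finset.nonempty_iff_ne_empty.2 hp1), zero_mul]
  · intro habs
    exact absurd (Finset.empty_mem_powerset p) habs

section RankLemmas

variable {F : Type} [Field F] {m : ℕ}

lemma matrix_rank_add_le {ι : Type} [Fintype ι] [DecidableEq ι]
    (A B : Matrix ι ι F) : (A + B).rank ≤ A.rank + B.rank := by
  classical
  rw [Matrix.rank, Matrix.mulVecLin_add]
  have hle : LinearMap.range (A.mulVecLin + B.mulVecLin)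
      ≤ LinearMap.range A.mulVecLin ⊔ LinearMap.range B.mulVecLin := by
    rintro x ⟨v, rfl⟩
    exact Submodule.add_mem_sup ⟨v, rfl⟩ ⟨v, rfl⟩
  calc Module.finrank F ↥(LinearMap.range (A.mulVecLin + B.mulVecLin))
      ≤ Module.finrank F ↥(LinearMap.range A.mulVecLin ⊔ LinearMap.range B.mulVecLin) :=
        Submodule.finrank_mono hle
    _ ≤ A.rank + B.rank := by
        have := Submodule.finrank_sup_add_finrank_inf_eq
          (LinearMap.range A.mulVecLin) (LinearMap.range B.mulVecLin)
        rw [Matrix.rank, Matrix.rank]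
        omega

lemma pdMatrix_add (f g : MvPolynomial (Fin m ⊕ Fin m) F) :
    pdMatrix F m (f + g) = pdMatrix F m f + pdMatrix F m g := by
  ext p q
  simp [pdMatrix, MvPolynomial.coeff_add]

lemma pdRank_sum_le {ι : Type*} (s : Finset ι) (f : ι → MvPolynomial (Fin m ⊕ Fin m) F) :
    pdRank F m (∑ t ∈ s, f t) ≤ ∑ t ∈ s, pdRank F m (f t) := by
  classical
  induction s using Finset.cons_induction with
  | empty =>
      simp only [Finset.sum_empty]
      have : pdMatrix F m (0 : MvPolynomial (Fin m ⊕ Fin m) F) = 0 := by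
        ext p q; simp [pdMatrix]
      rw [pdRank, this, Matrix.rank_zero]
  | cons a s ha ih =>
      rw [Finset.sum_cons, Finset.sum_cons]
      calc pdRank F m (f a + ∑ t ∈ s, f t)
          ≤ pdRank F m (f a) + pdRank F m (∑ t ∈ s, f t) := by
            rw [pdRank, pdMatrix_add]; exact matrix_rank_add_le _ _
        _ ≤ pdRank F m (f a) + ∑ t ∈ s, pdRank F m (f t) := by
            exact Nat.add_le_add_left ih _

lemma pdRank_mul_le_left {g : MvPolynomial (Fin m ⊕ Fin m) F}
    (h : MvPolynomial (Fin m ⊕ Fin m) F) (hg : LeftOnly g) :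
    pdRank F m (g * h) ≤ pdRank F m h := by
  classical
  have hfact : pdMatrix F m (g * h)
      = (Matrix.of fun (p r : Finset (Fin m)) => if r ⊆ p then g.coeff (mlMonom m (p \ r) ∅) else 0)
          * pdMatrix F m h := by
    ext p q
    rw [Matrix.mul_apply]
    show (g * h).coeff (mlMonom m p q) = _
    simp only [Matrix.of_apply]
    rw [coeff_mul_mlMonom_left h hg]
    rw [← Finset.sum_filter_add_sum_filter_not Finset.univ (fun r => r ⊆ p)]
    have hz : ∑ r ∈ Finset.univ.filter (fun r => ¬ r ⊆ p),
        (if r ⊆ p then g.coeff (mlMonom m (p \ r) ∅) else 0) * pdMatrix F m h r q = 0 := by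
      refine Finset.sum_eq_zero fun r hr => ?_
      rw [Finset.mem_filter] at hr
      simp [hr.2]
    rw [hz, add_zero]
    have hps : Finset.univ.filter (fun r => r ⊆ p) = p.powerset := by
      ext r; simp [Finset.mem_powerset]
    rw [hps]
    refine Finset.sum_nbij' (fun r => p \ r) (fun r => p \ r) ?_ ?_ ?_ ?_ ?_
    · intro r hr; simp [Finset.mem_powerset, Finset.sdiff_subset]
    · intro r hr; simp [Finset.mem_powerset, Finset.sdiff_subset]
    · intro r hr
      exact Finset.sdiff_sdiff_eq_self (Finset.mem_powerset.1 hr)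
    · intro r hr
      exact Finset.sdiff_sdiff_eq_self (Finset.mem_powerset.1 hr)
    · intro r hr
      rw [Finset.mem_powerset] at hr
      rw [Finset.sdiff_sdiff_eq_self hr]
      simp only [Finset.sdiff_subset, if_true, pdMatrix]
  rw [pdRank, pdRank, hfact]
  exact Matrix.rank_mul_le_right _ _

lemma pdRank_mul_le_right {g : MvPolynomial (Fin m ⊕ Fin m) F}
    (h : MvPolynomial (Fin m ⊕ Fin m) F) (hg : RightOnly g) :
    pdRank F m (g * h) ≤ pdRank F m h := by
  classical
  have hfact : pdMatrix F m (g * h)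
      = pdMatrix F m h *
        (Matrix.of fun (r q : Finset (Fin m)) => if r ⊆ q then g.coeff (mlMonom m ∅ (q \ r)) else 0) := by
    ext p q
    rw [Matrix.mul_apply]
    show (g * h).coeff (mlMonom m p q) = _
    simp only [Matrix.of_apply]
    rw [coeff_mul_mlMonom_right h hg]
    rw [← Finset.sum_filter_add_sum_filter_not Finset.univ (fun r => r ⊆ q)]
    have hz : ∑ r ∈ Finset.univ.filter (fun r => ¬ r ⊆ q),
        pdMatrix F m h p r * (if r ⊆ q then g.coeff (mlMonom m ∅ (q \ r)) else 0) = 0 := by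
      refine Finset.sum_eq_zero fun r hr => ?_
      rw [Finset.mem_filter] at hr
      simp [hr.2]
    rw [hz, add_zero]
    have hps : Finset.univ.filter (fun r => r ⊆ q) = q.powerset := by
      ext r; simp [Finset.mem_powerset]
    rw [hps]
    refine Finset.sum_nbij' (fun r => q \ r) (fun r => q \ r) ?_ ?_ ?_ ?_ ?_
    · intro r hr; simp [Finset.mem_powerset, Finset.sdiff_subset]
    · intro r hr; simp [Finset.mem_powerset, Finset.sdiff_subset]
    · intro r hr
      exact Finset.sdiff_sdiff_eq_self (Finset.mem_powerset.1 hr)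
    · intro r hr
      exact Finset.sdiff_sdiff_eq_self (Finset.mem_powerset.1 hr)
    · intro r hr
      rw [Finset.mem_powerset] at hr
      rw [Finset.sdiff_sdiff_eq_self hr]
      simp only [Finset.sdiff_subset, if_true, pdMatrix]
      ring
  rw [pdRank, pdRank, hfact]
  exact Matrix.rank_mul_le_left _ _

lemma pdRank_le_two_pow_rows (h : MvPolynomial (Fin m ⊕ Fin m) F) (T : Finset (Fin m))
    (hT : ∀ p q : Finset (Fin m), h.coeff (mlMonom m p q) ≠ 0 → p ⊆ T) :
    pdRank F m h ≤ 2 ^ T.card := by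
  classical
  set M := pdMatrix F m h with hM
  have hfact : M = (Matrix.of fun p (s : {x // x ∈ T.powerset}) =>
      if p = s.1 then (1 : F) else 0) * M.submatrix Subtype.val id := by
    ext p q
    erw [Matrix.mul_apply]
    simp only [Matrix.submatrix_apply, id_eq, Matrix.of_apply]
    by_cases hp : p ⊆ T
    · rw [Fintype.sum_eq_single (⟨p, Finset.mem_powerset.2 hp⟩ : {x // x ∈ T.powerset})]
      · simp
      · intro s hs
        have hne : p ≠ s.1 := fun he => hs (Subtype.ext he.symm)
        simp [hne]
    · have hz : M p q = 0 := by
        by_contra hne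
        exact hp (hT p q hne)
      rw [hz]
      refine (Finset.sum_eq_zero fun s _ => ?_).symm
      have hne : p ≠ s.1 := fun he => hp (by rw [he]; exact Finset.mem_powerset.1 s.2)
      simp [hne]
  calc pdRank F m h = M.rank := rfl
    _ ≤ (M.submatrix Subtype.val id).rank := by
          conv_lhs => rw [hfact]
          exact Matrix.rank_mul_le_right _ _
    _ ≤ Fintype.card {x // x ∈ T.powerset} := Matrix.rank_le_card_height (M.submatrix Subtype.val id)
    _ = 2 ^ T.card := by rw [Fintype.card_coe, Finset.card_powerset]

lemma pdRank_le_two_pow_cols (h : MvPolynomial (Fin m ⊕ Fin m) F) (T : Finset (Fin m))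
    (hT : ∀ p q : Finset (Fin m), h.coeff (mlMonom m p q) ≠ 0 → q ⊆ T) :
    pdRank F m h ≤ 2 ^ T.card := by
  classical
  set M := pdMatrix F m h with hM
  have hfact : M = M.submatrix id Subtype.val * (Matrix.of fun (s : {x // x ∈ T.powerset}) q =>
      if q = s.1 then (1 : F) else 0) := by
    ext p q
    erw [Matrix.mul_apply]
    simp only [Matrix.submatrix_apply, id_eq, Matrix.of_apply]
    by_cases hq : q ⊆ T
    · rw [Fintype.sum_eq_single (⟨q, Finset.mem_powerset.2 hq⟩ : {x // x ∈ T.powerset})]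
      · simp
      · intro s hs
        have hne : q ≠ s.1 := fun he => hs (Subtype.ext he.symm)
        simp [hne]
    · have hz : M p q = 0 := by
        by_contra hne
        exact hq (hT p q hne)
      rw [hz]
      refine (Finset.sum_eq_zero fun s _ => ?_).symm
      have hne : q ≠ s.1 := fun he => hq (by rw [he]; exact Finset.mem_powerset.1 s.2)
      simp [hne]
  calc pdRank F m h = M.rank := rfl
    _ ≤ (M.submatrix id Subtype.val).rank := by
          conv_lhs => rw [hfact]
          exact Matrix.rank_mul_le_left _ _
    _ ≤ Fintype.card {x // x ∈ T.powerset} := Matrix.rank_le_card_width (M.submatrix id Subtype.val)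
    _ = 2 ^ T.card := by rw [Fintype.card_coe, Finset.card_powerset]

end RankLemmas


/-- A polynomial is multilinear if every variable has degree at most 1 in each monomial. -/
def IsMultilinear {F V : Type*} [CommSemiring F] (f : MvPolynomial V F) : Prop :=
  ∀ mo ∈ f.support, ∀ v, mo v ≤ 1

/-- A set of variables is bi-chromatic under the balanced partition `φ` if its
image meets both the `Y`-variables (`Sum.inl`) and `Z`-variables (`Sum.inr`). -/
def Bichromatic {n m : ℕ} (φ : Fin n ≃ (Fin m ⊕ Fin m)) (S : Finset (Fin n)) : Prop :=
  (∃ x ∈ S, ∃ i, φ x = Sum.inl i) ∧ (∃ x ∈ S, ∃ i, φ x = Sum.inr i)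

set_option maxHeartbeats 1000000 in
lemma term_bound {F : Type} [Field F] {n m ℓ : ℕ} (φ : Fin n ≃ (Fin m ⊕ Fin m))
    (p : Fin ℓ → MvPolynomial (Fin n) F) (Xs : Fin ℓ → Finset (Fin n))
    (hvars : ∀ i, (p i).vars ⊆ Xs i)
    (hcard : ∀ i, ((Xs i).card : ℝ) ≤ Real.sqrt n)
    (i₁ i₂ : Fin ℓ) (hbi : ∀ i, Bichromatic φ (Xs i) → i = i₁ ∨ i = i₂) :
    (pdRank F m (MvPolynomial.rename φ (∏ i, p i)) : ℝ)
      ≤ (2 : ℝ) ^ (Real.sqrt n) := by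
  classical
  set q : Fin ℓ → MvPolynomial (Fin m ⊕ Fin m) F := fun i => MvPolynomial.rename φ (p i)
    with hqdef
  have hq : MvPolynomial.rename φ (∏ i, p i) = ∏ i, q i := by
    simp [hqdef, map_prod]
  have hqvars : ∀ i, (q i).vars ⊆ (Xs i).image φ := by
    intro i
    refine (MvPolynomial.vars_rename φ (p i)).trans ?_
    exact Finset.image_subset_image (hvars i)
  set P1 : Fin ℓ → Prop := fun i => Bichromatic φ (Xs i) with hP1
  set P2 : Fin ℓ → Prop := fun i => ∀ x ∈ Xs i, ∃ j, φ x = Sum.inl j with hP2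
  set SB := Finset.univ.filter P1 with hSB
  set SY := (Finset.univ.filter fun i => ¬ P1 i).filter P2 with hSY
  set SZ := (Finset.univ.filter fun i => ¬ P1 i).filter (fun i => ¬ P2 i) with hSZ
  set A := ∏ i ∈ SY, q i with hA
  set B := ∏ i ∈ SB, q i with hB
  set C := ∏ i ∈ SZ, q i with hC
  have hsplit : ∏ i, q i = A * (C * B) := by
    rw [hA, hB, hC, hSY, hSZ, hSB]
    rw [← Finset.prod_filter_mul_prod_filter_not Finset.univ P1 q,
      ← Finset.prod_filter_mul_prod_filter_not (Finset.univ.filter fun i => ¬ P1 i) P2 q]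
    ring
  -- A is LeftOnly
  have hAleft : LeftOnly A := by
    refine leftOnly_of_vars fun v hv => ?_
    obtain ⟨i, hiS, hvi⟩ := Finset.mem_biUnion.1 (MvPolynomial.vars_prod q hv)
    have hP2i := (Finset.mem_filter.1 hiS).2
    simp only [hP2] at hP2i
    obtain ⟨x, hx, rfl⟩ := Finset.mem_image.1 (hqvars i hvi)
    exact hP2i x hx
  -- C is RightOnly
  have hCright : RightOnly C := by
    refine rightOnly_of_vars fun v hv => ?_
    obtain ⟨i, hiS, hvi⟩ := Finset.mem_biUnion.1 (MvPolynomial.vars_prod q hv)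
    have hi := Finset.mem_filter.1 hiS
    have hnP1 := (Finset.mem_filter.1 hi.1).2
    simp only [hP1, Bichromatic] at hnP1
    have hnP2 := hi.2
    simp only [hP2] at hnP2
    push_neg at hnP2
    obtain ⟨x0, hx0, hx0n⟩ := hnP2
    have hZ : ∃ x ∈ Xs i, ∃ j, φ x = Sum.inr j := by
      refine ⟨x0, hx0, ?_⟩
      rcases h : φ x0 with j | j
      · exact absurd h (hx0n j)
      · exact ⟨j, by simp [h]⟩
    have hnY : ¬ ∃ x ∈ Xs i, ∃ k, φ x = Sum.inl k := by
      intro hY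
      exact hnP1 ⟨hY, hZ⟩
    obtain ⟨x, hx, rfl⟩ := Finset.mem_image.1 (hqvars i hvi)
    rcases h : φ x with k | k
    · exact absurd ⟨x, hx, k, h⟩ hnY
    · exact ⟨k, by simp [h]⟩
  -- rank chain down to B
  have hchain : pdRank F m (MvPolynomial.rename φ (∏ i, p i)) ≤ pdRank F m B := by
    rw [hq, hsplit]
    exact le_trans (pdRank_mul_le_left _ hAleft) (pdRank_mul_le_right _ hCright)
  -- row/column supports of B
  set TY := Finset.univ.filter (fun i : Fin m => Sum.inl i ∈ B.vars) with hTY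
  set TZ := Finset.univ.filter (fun j : Fin m => Sum.inr j ∈ B.vars) with hTZ
  have hrow : ∀ pp qq : Finset (Fin m), B.coeff (mlMonom m pp qq) ≠ 0 → pp ⊆ TY := by
    intro pp qq hne i hi
    have hsup : mlMonom m pp qq ∈ B.support := MvPolynomial.mem_support_iff.2 hne
    have hmem : Sum.inl i ∈ (mlMonom m pp qq).support :=
      Finsupp.mem_support_iff.2 (by rw [mlMonom_apply_inl]; simp [hi])
    have : Sum.inl i ∈ B.vars := (MvPolynomial.mem_vars _).2 ⟨_, hsup, hmem⟩
    simp [hTY, this]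
  have hcol : ∀ pp qq : Finset (Fin m), B.coeff (mlMonom m pp qq) ≠ 0 → qq ⊆ TZ := by
    intro pp qq hne j hj
    have hsup : mlMonom m pp qq ∈ B.support := MvPolynomial.mem_support_iff.2 hne
    have hmem : Sum.inr j ∈ (mlMonom m pp qq).support :=
      Finsupp.mem_support_iff.2 (by rw [mlMonom_apply_inr]; simp [hj])
    have : Sum.inr j ∈ B.vars := (MvPolynomial.mem_vars _).2 ⟨_, hsup, hmem⟩
    simp [hTZ, this]
  have hB1 : pdRank F m B ≤ 2 ^ TY.card := pdRank_le_two_pow_rows B TY hrow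
  have hB2 : pdRank F m B ≤ 2 ^ TZ.card := pdRank_le_two_pow_cols B TZ hcol
  -- cardinality bounds
  have hcards : TY.card + TZ.card ≤ B.vars.card := by
    have hdisj : Disjoint (TY.image Sum.inl) (TZ.image (Sum.inr : Fin m → Fin m ⊕ Fin m)) := by
      rw [Finset.disjoint_left]
      rintro v hv1 hv2
      obtain ⟨i, _, rfl⟩ := Finset.mem_image.1 hv1
      obtain ⟨j, _, hj⟩ := Finset.mem_image.1 hv2
      exact nomatch hj
    have hsub : TY.image Sum.inl ∪ TZ.image Sum.inr ⊆ B.vars := by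
      intro v hv
      rcases Finset.mem_union.1 hv with hv | hv
      · obtain ⟨i, hi, rfl⟩ := Finset.mem_image.1 hv
        exact (Finset.mem_filter.1 hi).2
      · obtain ⟨j, hj, rfl⟩ := Finset.mem_image.1 hv
        exact (Finset.mem_filter.1 hj).2
    calc TY.card + TZ.card
        = (TY.image Sum.inl).card + (TZ.image (Sum.inr : Fin m → Fin m ⊕ Fin m)).card := by
          rw [Finset.card_image_of_injective _ Sum.inl_injective,
            Finset.card_image_of_injective _ Sum.inr_injective]
      _ = (TY.image Sum.inl ∪ TZ.image Sum.inr).card :=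
          (Finset.card_union_of_disjoint hdisj).symm
      _ ≤ B.vars.card := Finset.card_le_card hsub
  have hvB : (B.vars.card : ℝ) ≤ 2 * Real.sqrt n := by
    have hsub2 : B.vars ⊆ ((Xs i₁).image φ) ∪ ((Xs i₂).image φ) := by
      intro v hv
      obtain ⟨i, hiS, hvi⟩ := Finset.mem_biUnion.1 (MvPolynomial.vars_prod q hv)
      have hP1i := (Finset.mem_filter.1 hiS).2
      simp only [hP1] at hP1i
      have hvq : v ∈ (Xs i).image φ := hqvars i hvi
      rcases hbi i hP1i with rfl | rfl
      · exact Finset.mem_union.2 (Or.inl hvq)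
      · exact Finset.mem_union.2 (Or.inr hvq)
    have h1 : B.vars.card ≤ (Xs i₁).card + (Xs i₂).card := by
      calc B.vars.card ≤ (((Xs i₁).image φ) ∪ ((Xs i₂).image φ)).card :=
            Finset.card_le_card hsub2
        _ ≤ ((Xs i₁).image φ).card + ((Xs i₂).image φ).card := Finset.card_union_le _ _
        _ ≤ (Xs i₁).card + (Xs i₂).card :=
            Nat.add_le_add (Finset.card_image_le) (Finset.card_image_le)
    have h2 : ((Xs i₁).card : ℝ) + ((Xs i₂).card : ℝ) ≤ 2 * Real.sqrt n := by
      have := hcard i₁; have := hcard i₂; linarith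
    calc (B.vars.card : ℝ) ≤ ((Xs i₁).card : ℝ) + ((Xs i₂).card : ℝ) := by
          exact_mod_cast h1
      _ ≤ 2 * Real.sqrt n := h2
  -- put it together
  have hfin : ∀ k : ℕ, pdRank F m B ≤ 2 ^ k → (k : ℝ) ≤ Real.sqrt n →
      (pdRank F m (MvPolynomial.rename φ (∏ i, p i)) : ℝ) ≤ (2 : ℝ) ^ (Real.sqrt n) := by
    intro k hk hkr
    have h1 : pdRank F m (MvPolynomial.rename φ (∏ i, p i)) ≤ 2 ^ k := le_trans hchain hk
    have h2 : (pdRank F m (MvPolynomial.rename φ (∏ i, p i)) : ℝ) ≤ ((2 ^ k : ℕ) : ℝ) :=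
      Nat.cast_le.2 h1
    have h3 : ((2 ^ k : ℕ) : ℝ) = (2 : ℝ) ^ (k : ℝ) := by
      rw [Real.rpow_natCast]
      push_cast
      ring
    rw [h3] at h2
    exact le_trans h2 ((Real.rpow_le_rpow_left_iff one_lt_two).2 hkr)
  rcases le_total TY.card TZ.card with hle | hle
  · refine hfin TY.card hB1 ?_
    have : (2 : ℝ) * TY.card ≤ 2 * Real.sqrt n := by
      have hc : (TY.card : ℝ) + (TZ.card : ℝ) ≤ (B.vars.card : ℝ) := by exact_mod_cast hcards
      have hle' : (TY.card : ℝ) ≤ (TZ.card : ℝ) := by exact_mod_cast hle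
      linarith
    linarith
  · refine hfin TZ.card hB2 ?_
    have : (2 : ℝ) * TZ.card ≤ 2 * Real.sqrt n := by
      have hc : (TY.card : ℝ) + (TZ.card : ℝ) ≤ (B.vars.card : ℝ) := by exact_mod_cast hcards
      have hle' : (TZ.card : ℝ) ≤ (TY.card : ℝ) := by exact_mod_cast hle
      linarith
    linarith


/-- if `f` is a sum of at most `N` terms, each a product of
multilinear polynomials on pairwise disjoint variable sets of size at most
`√n`, at most two of which are bi-chromatic under the fixed balanced partition
`φ`, then `rank_φ(f) ≤ N · 2^{√n}`. -/
theorem rank_bound_for_structured_sum (F : Type) [Field F] (n N : ℕ)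
    (φ : Fin n ≃ (Fin (n / 2) ⊕ Fin (n / 2)))
    (f : MvPolynomial (Fin n) F) (hml : IsMultilinear f)
    (g : Fin N → MvPolynomial (Fin n) F) (hsum : f = ∑ t, g t)
    (hterm : ∀ t, ∃ (ℓ : ℕ) (p : Fin ℓ → MvPolynomial (Fin n) F)
        (Xs : Fin ℓ → Finset (Fin n)),
      g t = ∏ i, p i ∧
      (∀ i, IsMultilinear (p i)) ∧
      (∀ i, (p i).vars ⊆ Xs i) ∧
      (∀ i j, i ≠ j → Disjoint (Xs i) (Xs j)) ∧
      (∀ i, ((Xs i).card : ℝ) ≤ Real.sqrt n) ∧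
      (∃ i₁ i₂, ∀ i, Bichromatic φ (Xs i) → i = i₁ ∨ i = i₂)) :
    (pdRank F (n / 2) (MvPolynomial.rename φ f) : ℝ)
      ≤ (N : ℝ) * (2 : ℝ) ^ (Real.sqrt n) := by
  have key : ∀ t, (pdRank F (n / 2) (MvPolynomial.rename φ (g t)) : ℝ)
      ≤ (2 : ℝ) ^ (Real.sqrt n) := by
    intro t
    obtain ⟨ℓ, p, Xs, hgt, _, hvars, _, hcard, i₁, i₂, hbi⟩ := hterm t
    rw [hgt]
    exact term_bound φ p Xs hvars hcard i₁ i₂ hbi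
  calc (pdRank F (n / 2) (MvPolynomial.rename φ f) : ℝ)
      ≤ ∑ t, (pdRank F (n / 2) (MvPolynomial.rename φ (g t)) : ℝ) := by
        rw [hsum, map_sum]
        exact_mod_cast pdRank_sum_le Finset.univ (fun t => MvPolynomial.rename φ (g t))
    _ ≤ ∑ _t : Fin N, (2 : ℝ) ^ (Real.sqrt n) :=
        Finset.sum_le_sum fun t _ => key t
    _ = (N : ℝ) * (2 : ℝ) ^ (Real.sqrt n) := by
        rw [Finset.sum_const, Finset.card_univ, Fintype.card_fin, nsmul_eq_mul]
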